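/- Riccati update propagation: if P̃ = P + V C† Vᵀ with P ⪰ 0, C ⪰ 0, range(Vᵀ) ⊆ range(C), then the Riccati step applied to P̃ equals the Riccati step applied to P plus V' C'† V'ᵀ, where V' := (Aᵀ - H̃ G̃† Bᵀ) V, C' := C - Vᵀ B G̃† Bᵀ V, G̃ := Qw + BᵀP̃B, H̃ := Qxw + AᵀP̃B; moreover C' ⪰ 0 and range(V'ᵀ) ⊆ range(C'). -/

import Mathlib

open Matrix

/-- The four Moore–Penrose conditions: `Dp` is the Moore–Penrose pseudoinverse of `D`. -/
def IsMP {α : Type*} [Fintype α] [DecidableEq α] (D Dp : Matrix α α ℝ) : Prop :=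
  D * Dp * D = D ∧ Dp * D * Dp = Dp ∧ (D * Dp)ᵀ = D * Dp ∧ (Dp * D)ᵀ = Dp * D

set_option linter.unusedSectionVars false
set_option maxHeartbeats 1000000



section Aux

variable {l m n : Type*} [Fintype l] [DecidableEq l] [Fintype m] [DecidableEq m]
  [Fintype n] [DecidableEq n]

lemma isMP_unique {D X Y : Matrix m m ℝ} (hX : IsMP D X) (hY : IsMP D Y) : X = Y := by
  obtain ⟨X1, X2, X3, X4⟩ := hX
  obtain ⟨Y1, Y2, Y3, Y4⟩ := hY
  have hXY : X = X * D * Y := by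
    calc X = X * D * X := X2.symm
    _ = X * (D * X)ᵀ := by rw [X3, Matrix.mul_assoc]
    _ = X * ((D * Y * D) * X)ᵀ := by rw [Y1]
    _ = X * (D * X)ᵀ * (D * Y)ᵀ := by
        simp only [transpose_mul, Matrix.mul_assoc]
    _ = X * (D * X) * (D * Y) := by rw [X3, Y3]
    _ = X * D * X * D * Y := by simp only [Matrix.mul_assoc]
    _ = X * D * Y := by rw [X2]
  have hYX : Y = X * D * Y := by
    calc Y = Y * D * Y := Y2.symm
    _ = (Y * D)ᵀ * Y := by rw [Y4]
    _ = ((Y * (D * X * D))ᵀ) * Y := by rw [X1]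
    _ = (X * D)ᵀ * (Y * D)ᵀ * Y := by
        simp only [transpose_mul, Matrix.mul_assoc]
    _ = X * D * (Y * D) * Y := by rw [X4, Y4]
    _ = X * D * (Y * D * Y) := by simp only [Matrix.mul_assoc]
    _ = X * D * Y := by rw [Y2]
  rw [hXY, ← hYX]

lemma IsMP.symm_of_symm {D X : Matrix m m ℝ} (hD : Dᵀ = D) (hX : IsMP D X) : Xᵀ = X := by
  have hXT : IsMP D Xᵀ := by
    obtain ⟨X1, X2, X3, X4⟩ := hX
    refine ⟨?_, ?_, ?_, ?_⟩
    · calc D * Xᵀ * D = (Dᵀ * X * Dᵀ)ᵀ := by simp [transpose_mul, Matrix.mul_assoc]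
      _ = (D * X * D)ᵀ := by rw [hD]
      _ = D := by rw [X1, hD]
    · calc Xᵀ * D * Xᵀ = (X * Dᵀ * X)ᵀ := by simp [transpose_mul, Matrix.mul_assoc]
      _ = (X * D * X)ᵀ := by rw [hD]
      _ = Xᵀ := by rw [X2]
    · calc (D * Xᵀ)ᵀ = X * D := by rw [transpose_mul, transpose_transpose, hD]
      _ = (X * D)ᵀ := X4.symm
      _ = Dᵀ * Xᵀ := by rw [transpose_mul]
      _ = D * Xᵀ := by rw [hD]
    · calc (Xᵀ * D)ᵀ = D * X := by rw [transpose_mul, transpose_transpose, hD]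
      _ = (D * X)ᵀ := X3.symm
      _ = Xᵀ * Dᵀ := by rw [transpose_mul]
      _ = Xᵀ * D := by rw [hD]
  exact isMP_unique hXT hX

end Aux


set_option linter.unusedSectionVars false
section Aux2
variable {m n : Type*} [Fintype m] [DecidableEq m] [Fintype n] [DecidableEq n]

lemma psd_quad_zero {M : Matrix m m ℝ} (hM : M.PosSemidef) {x : m → ℝ}
    (h : x ⬝ᵥ (M *ᵥ x) = 0) : M *ᵥ x = 0 :=
  (hM.dotProduct_mulVec_zero_iff x).mp (by simpa using h)

lemma psd_nonneg {M : Matrix m m ℝ} (hM : M.PosSemidef) (x : m → ℝ) :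
    0 ≤ x ⬝ᵥ (M *ᵥ x) := by simpa using hM.dotProduct_mulVec_nonneg x

lemma psd_conj {M : Matrix m m ℝ} (hM : M.PosSemidef) (B : Matrix m n ℝ) :
    (Bᵀ * M * B).PosSemidef := by
  have := hM.conjTranspose_mul_mul_same B
  simpa [conjTranspose_eq_transpose_of_trivial] using this

lemma blk_ker {X : Matrix n n ℝ} {Y : Matrix n m ℝ} {Y' : Matrix m n ℝ} {Z : Matrix m m ℝ}
    (h : (fromBlocks X Y Y' Z).PosSemidef) {v : m → ℝ} (hv : Z *ᵥ v = 0) : Y *ᵥ v = 0 := by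
  have hmv : (fromBlocks X Y Y' Z) *ᵥ (Sum.elim 0 v) = Sum.elim (Y *ᵥ v) 0 := by
    rw [fromBlocks_mulVec]
    simp [hv]
  have hq : (Sum.elim (0 : n → ℝ) v) ⬝ᵥ ((fromBlocks X Y Y' Z) *ᵥ (Sum.elim 0 v)) = 0 := by
    rw [hmv, sumElim_dotProduct_sumElim]
    simp
  have h0 := psd_quad_zero h hq
  rw [hmv] at h0
  funext i
  exact congrFun h0 (Sum.inl i)

lemma absorb {Z Zp : Matrix m m ℝ} {Y : Matrix n m ℝ} (hZ : Zᵀ = Z) (hZp : Zpᵀ = Zp)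
    (h : IsMP Z Zp) (hker : ∀ v, Z *ᵥ v = 0 → Y *ᵥ v = 0) : Z * Zp * Yᵀ = Yᵀ := by
  have hP : Z * (1 - Zp * Z) = 0 := by
    rw [Matrix.mul_sub, Matrix.mul_one, ← Matrix.mul_assoc, h.1, sub_self]
  have hYP : Y * (1 - Zp * Z) = 0 := by
    ext i j
    have hcol : Z *ᵥ (fun t => (1 - Zp * Z) t j) = 0 := by
      funext i'
      have := congrFun (congrFun hP i') j
      simpa [Matrix.mul_apply, Matrix.mulVec, dotProduct] using this
    have := congrFun (hker _ hcol) i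
    simpa [Matrix.mul_apply, Matrix.mulVec, dotProduct] using this
  have hY : Y = Y * (Zp * Z) := by
    have h2 : Y * (1 - Zp * Z) = Y - Y * (Zp * Z) := by
      rw [Matrix.mul_sub, Matrix.mul_one]
    rw [h2] at hYP
    exact (sub_eq_zero.mp hYP)
  calc Z * Zp * Yᵀ = Zᵀ * Zpᵀ * Yᵀ := by rw [hZ, hZp]
  _ = (Zp * Z)ᵀ * Yᵀ := by rw [transpose_mul]
  _ = (Zp * Z) * Yᵀ := by rw [h.2.2.2]
  _ = (Y * (Zp * Z))ᵀ := by rw [transpose_mul, h.2.2.2]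
  _ = Yᵀ := by rw [← hY]

end Aux2
set_option linter.unusedSectionVars false

section Aux4
variable {m n p q : Type*} [Fintype m] [DecidableEq m] [Fintype n] [DecidableEq n]
  [Fintype p] [DecidableEq p] [Fintype q] [DecidableEq q]

lemma quad_conj (N : Matrix p p ℝ) (M : Matrix p q ℝ) (z : q → ℝ) :
    z ⬝ᵥ ((Mᵀ * N * M) *ᵥ z) = (M *ᵥ z) ⬝ᵥ (N *ᵥ (M *ᵥ z)) := by
  rw [Matrix.mul_assoc, ← Matrix.mulVec_mulVec, Matrix.dotProduct_mulVec,
    Matrix.vecMul_transpose, ← Matrix.mulVec_mulVec]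

lemma block_shift (Qx : Matrix p p ℝ) (Qxw : Matrix p q ℝ) (Qw : Matrix q q ℝ)
    (A : Matrix p p ℝ) (B : Matrix p q ℝ) (P : Matrix p p ℝ)
    (hQ : (fromBlocks Qx Qxw Qxwᵀ Qw).PosSemidef) (hP : P.PosSemidef) :
    (fromBlocks (Qx + Aᵀ * P * A) (Qxw + Aᵀ * P * B)
      (Qxwᵀ + Bᵀ * P * A) (Qw + Bᵀ * P * B)).PosSemidef := by
  have h1 : ((fromCols A B)ᵀ * P * (fromCols A B)).PosSemidef := by
    have := hP.conjTranspose_mul_mul_same (fromCols A B)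
    simpa [conjTranspose_eq_transpose_of_trivial] using this
  have h2 : (fromCols A B)ᵀ * P * (fromCols A B)
      = fromBlocks (Aᵀ * P * A) (Aᵀ * P * B) (Bᵀ * P * A) (Bᵀ * P * B) := by
    rw [transpose_fromCols, Matrix.mul_assoc, mul_fromCols, fromRows_mul_fromCols]
    simp only [Matrix.mul_assoc]
  rw [h2] at h1
  have h3 := hQ.add h1
  rwa [fromBlocks_add] at h3

end Aux4

set_option linter.unusedSectionVars false
set_option maxHeartbeats 1000000

section Key
variable {k m n : Type*} [Fintype k] [DecidableEq k] [Fintype m] [DecidableEq m]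
  [Fintype n] [DecidableEq n]

lemma key (Cm c c' C' : Matrix k k ℝ) (g T G Gt : Matrix m m ℝ)
    (Δ : Matrix m k ℝ) (W V' : Matrix n k ℝ) (H Ht : Matrix n m ℝ)
    (hGt : Gt = G + Δ * c * Δᵀ)
    (hHt : Ht = H + W * c * Δᵀ)
    (hC' : C' = Cm - Δᵀ * T * Δ)
    (hV' : V' = W - Ht * T * Δ)
    (hCs : Cmᵀ = Cm) (hcs : cᵀ = c) (hgs : gᵀ = g) (hTs : Tᵀ = T) (hGts : Gtᵀ = Gt)
    (hCcW : Cm * c * Wᵀ = Wᵀ) (hCcΔ : Cm * c * Δᵀ = Δᵀ)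
    (hGgH : G * g * Hᵀ = Hᵀ)
    (hGtTHt : Gt * T * Htᵀ = Htᵀ) (hGtTΔ : Gt * T * Δ = Δ)
    (hC'c'V' : C' * c' * V'ᵀ = V'ᵀ) :
    W * c * Wᵀ + H * g * Hᵀ = Ht * T * Htᵀ + V' * c' * V'ᵀ := by
  set z11 : Matrix k n ℝ := c * Wᵀ - c * Δᵀ * g * Hᵀ with hz11
  set z12 : Matrix m n ℝ := g * Hᵀ with hz12
  set z21 : Matrix k n ℝ := c' * V'ᵀ with hz21
  set z22 : Matrix m n ℝ := T * Htᵀ - T * Δ * z21 with hz22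
  have hHtT : Htᵀ = Hᵀ + Δ * (c * Wᵀ) := by
    rw [hHt]; simp only [transpose_add, transpose_mul, transpose_transpose, hcs,
      Matrix.mul_assoc]
  have hV'T : V'ᵀ = Wᵀ - Δᵀ * T * Htᵀ := by
    rw [hV']; simp only [transpose_sub, transpose_mul, transpose_transpose, hTs,
      Matrix.mul_assoc]
  have e1 : Cm * z21 + Δᵀ * z22 = Wᵀ := by
    have t1 : Cm * z21 - Δᵀ * T * (Δ * z21) = V'ᵀ := by
      calc Cm * z21 - Δᵀ * T * (Δ * z21) = (Cm - Δᵀ * T * Δ) * (c' * V'ᵀ) := by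
            rw [hz21]; simp only [Matrix.sub_mul, Matrix.mul_assoc]
      _ = C' * c' * V'ᵀ := by rw [← hC', Matrix.mul_assoc]
      _ = V'ᵀ := hC'c'V'
    calc Cm * z21 + Δᵀ * z22
        = (Cm * z21 - Δᵀ * T * (Δ * z21)) + Δᵀ * T * Htᵀ := by
          rw [hz22]; simp only [Matrix.mul_sub, Matrix.mul_assoc]; abel
    _ = V'ᵀ + Δᵀ * T * Htᵀ := by rw [t1]
    _ = Wᵀ := by rw [hV'T]; abel
  have e2 : Δ * z21 + Gt * z22 = Htᵀ := by
    calc Δ * z21 + Gt * z22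
        = Δ * z21 + Gt * T * Htᵀ - Gt * T * Δ * z21 := by
          rw [hz22]; simp only [Matrix.mul_sub, Matrix.mul_assoc]; abel
    _ = Δ * z21 + Htᵀ - Δ * z21 := by rw [hGtTHt, hGtTΔ]
    _ = Htᵀ := by abel
  have e3 : Cm * z11 + Δᵀ * z12 = Wᵀ := by
    calc Cm * z11 + Δᵀ * z12
        = Cm * c * Wᵀ - (Cm * c * Δᵀ) * (g * Hᵀ) + Δᵀ * (g * Hᵀ) := by
          rw [hz11, hz12]; simp only [Matrix.mul_sub, Matrix.mul_assoc]
    _ = Wᵀ := by rw [hCcW, hCcΔ]; abel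
  have e4 : Δ * z11 + Gt * z12 = Htᵀ := by
    calc Δ * z11 + Gt * z12
        = Δ * (c * Wᵀ) - Δ * (c * (Δᵀ * (g * Hᵀ))) + (G * g * Hᵀ + Δ * (c * (Δᵀ * (g * Hᵀ)))) := by
          rw [hz11, hz12, hGt]
          simp only [Matrix.mul_sub, Matrix.add_mul, Matrix.mul_assoc]
    _ = Δ * (c * Wᵀ) + Hᵀ := by rw [hGgH]; abel
    _ = Htᵀ := by rw [hHtT]; abel
  have e5 : z11ᵀ * Wᵀ + z12ᵀ * Htᵀ = W * c * Wᵀ + H * g * Hᵀ := by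
    rw [hz11, hz12, hHtT]
    simp only [transpose_sub, transpose_mul, transpose_transpose, hcs, hgs,
      Matrix.sub_mul, Matrix.mul_add, Matrix.mul_assoc]
    abel
  have e6 : W * z21 + Ht * z22 = Ht * T * Htᵀ + V' * c' * V'ᵀ := by
    rw [hz22, hz21, hV']
    simp only [Matrix.mul_sub, Matrix.sub_mul, Matrix.mul_assoc]
    abel
  calc W * c * Wᵀ + H * g * Hᵀ
      = z11ᵀ * Wᵀ + z12ᵀ * Htᵀ := e5.symm
  _ = z11ᵀ * (Cm * z21 + Δᵀ * z22) + z12ᵀ * (Δ * z21 + Gt * z22) := by rw [e1, e2]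
  _ = (Cm * z11 + Δᵀ * z12)ᵀ * z21 + (Δ * z11 + Gt * z12)ᵀ * z22 := by
      simp only [transpose_add, transpose_mul, transpose_transpose, hCs, hGts,
        Matrix.mul_add, Matrix.add_mul, Matrix.mul_assoc]
      abel
  _ = Wᵀᵀ * z21 + Htᵀᵀ * z22 := by rw [e3, e4]
  _ = W * z21 + Ht * z22 := by rw [transpose_transpose, transpose_transpose]
  _ = Ht * T * Htᵀ + V' * c' * V'ᵀ := e6

end Key

theorem riccati_update_propagation {n m k : ℕ}
    (A : Matrix (Fin n) (Fin n) ℝ) (B : Matrix (Fin n) (Fin m) ℝ)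
    (P : Matrix (Fin n) (Fin n) ℝ)
    (Qx : Matrix (Fin n) (Fin n) ℝ) (Qxw : Matrix (Fin n) (Fin m) ℝ)
    (Qw : Matrix (Fin m) (Fin m) ℝ)
    (V : Matrix (Fin n) (Fin k) ℝ) (C Cp : Matrix (Fin k) (Fin k) ℝ)
    (Gp Gtp : Matrix (Fin m) (Fin m) ℝ) (Cp' : Matrix (Fin k) (Fin k) ℝ)
    (hQ : (Matrix.fromBlocks Qx Qxw Qxwᵀ Qw).PosSemidef)
    (hP : P.PosSemidef) (hC : C.PosSemidef)
    (hV : ∃ Y : Matrix (Fin k) (Fin n) ℝ, Vᵀ = C * Y)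
    (hCp : IsMP C Cp)
    (hGp : IsMP (Qw + Bᵀ * P * B) Gp)
    (hGtp : IsMP (Qw + Bᵀ * (P + V * Cp * Vᵀ) * B) Gtp)
    (hCp' : IsMP (C - Vᵀ * B * Gtp * Bᵀ * V) Cp') :
    ((Qx + Aᵀ * (P + V * Cp * Vᵀ) * A) -
      (Qxw + Aᵀ * (P + V * Cp * Vᵀ) * B) * Gtp *
        (Qxw + Aᵀ * (P + V * Cp * Vᵀ) * B)ᵀ =
    ((Qx + Aᵀ * P * A) - (Qxw + Aᵀ * P * B) * Gp * (Qxw + Aᵀ * P * B)ᵀ) +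
      ((Aᵀ - (Qxw + Aᵀ * (P + V * Cp * Vᵀ) * B) * Gtp * Bᵀ) * V) * Cp' *
        ((Aᵀ - (Qxw + Aᵀ * (P + V * Cp * Vᵀ) * B) * Gtp * Bᵀ) * V)ᵀ) ∧
    (C - Vᵀ * B * Gtp * Bᵀ * V).PosSemidef ∧
    (∃ Y : Matrix (Fin k) (Fin n) ℝ,
      ((Aᵀ - (Qxw + Aᵀ * (P + V * Cp * Vᵀ) * B) * Gtp * Bᵀ) * V)ᵀ =
        (C - Vᵀ * B * Gtp * Bᵀ * V) * Y) := by
  classical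
  obtain ⟨Y, hY⟩ := hV
  set Pt : Matrix (Fin n) (Fin n) ℝ := P + V * Cp * Vᵀ with hPtdef
  set G : Matrix (Fin m) (Fin m) ℝ := Qw + Bᵀ * P * B with hGdef
  set Gt : Matrix (Fin m) (Fin m) ℝ := Qw + Bᵀ * Pt * B with hGtdef
  set H : Matrix (Fin n) (Fin m) ℝ := Qxw + Aᵀ * P * B with hHdef
  set Ht : Matrix (Fin n) (Fin m) ℝ := Qxw + Aᵀ * Pt * B with hHtdef
  set C' : Matrix (Fin k) (Fin k) ℝ := C - Vᵀ * B * Gtp * Bᵀ * V with hC'def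
  set V' : Matrix (Fin n) (Fin k) ℝ := (Aᵀ - Ht * Gtp * Bᵀ) * V with hV'def
  set W : Matrix (Fin n) (Fin k) ℝ := Aᵀ * V with hWdef
  set E : Matrix (Fin m) (Fin k) ℝ := Gtp * (Bᵀ * V) with hEdef
  set Yb : Matrix (Fin k) (Fin m) ℝ := Y * B with hYbdef
  -- basic symmetry facts
  have hCt : Cᵀ = C := by rw [← conjTranspose_eq_transpose_of_trivial]; exact hC.1
  have hQw_psd : Qw.PosSemidef := by
    have h := hQ.submatrix Sum.inr
    have e : (fromBlocks Qx Qxw Qxwᵀ Qw).submatrix Sum.inr Sum.inr = Qw := by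
      ext i j; simp [Matrix.submatrix_apply]
    rwa [e] at h
  have hcs : Cpᵀ = Cp := IsMP.symm_of_symm hCt hCp
  have hCp_psd : Cp.PosSemidef := by
    have h2 : Cpᵀ * C * Cp = Cp := by rw [hcs]; exact hCp.2.1
    rw [← h2]; exact psd_conj hC Cp
  have hVCV_psd : (V * Cp * Vᵀ).PosSemidef := by
    have h := psd_conj hCp_psd Vᵀ; simpa using h
  have hPt_psd : Pt.PosSemidef := by rw [hPtdef]; exact hP.add hVCV_psd
  have hG_psd : G.PosSemidef := by rw [hGdef]; exact hQw_psd.add (psd_conj hP B)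
  have hGt_psd : Gt.PosSemidef := by rw [hGtdef]; exact hQw_psd.add (psd_conj hPt_psd B)
  have hGs : Gᵀ = G := by rw [← conjTranspose_eq_transpose_of_trivial]; exact hG_psd.1
  have hGts : Gtᵀ = Gt := by rw [← conjTranspose_eq_transpose_of_trivial]; exact hGt_psd.1
  have hgs : Gpᵀ = Gp := IsMP.symm_of_symm hGs hGp
  have hTs : Gtpᵀ = Gtp := IsMP.symm_of_symm hGts hGtp
  -- range facts for C
  have hCcV : C * Cp * Vᵀ = Vᵀ := by rw [hY, ← Matrix.mul_assoc, hCp.1]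
  have hCcVB : C * Cp * (Vᵀ * B) = Vᵀ * B := by rw [← Matrix.mul_assoc, hCcV]
  have hCcVA : C * Cp * (Vᵀ * A) = Vᵀ * A := by rw [← Matrix.mul_assoc, hCcV]
  have hVB : Vᵀ * B = C * Yb := by rw [hYbdef, hY, Matrix.mul_assoc]
  have h3 : Bᵀ * V * (Cp * C) = Bᵀ * V := by
    have h := congrArg Matrix.transpose hCcVB
    simpa [transpose_mul, transpose_transpose, hCt, hcs, Matrix.mul_assoc] using h
  have h4 : V * (Cp * C) = V := by
    have h := congrArg Matrix.transpose hCcV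
    simpa [transpose_mul, transpose_transpose, hCt, hcs, Matrix.mul_assoc] using h
  have hVY : V = Yᵀ * C := by
    have h := congrArg Matrix.transpose hY
    simpa [transpose_mul, transpose_transpose, hCt] using h
  -- absorption for G, H
  have hblkP := block_shift Qx Qxw Qw A B P hQ hP
  have hkerGH : ∀ v, G *ᵥ v = 0 → H *ᵥ v = 0 := by
    intro v hv
    rw [hHdef]
    exact blk_ker hblkP (by rw [hGdef] at hv; exact hv)
  have hGgH : G * Gp * Hᵀ = Hᵀ := absorb hGs hgs hGp hkerGH
  -- absorption for Gt, Ht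
  have hblkPt := block_shift Qx Qxw Qw A B Pt hQ hPt_psd
  have hkerGtHt : ∀ v, Gt *ᵥ v = 0 → Ht *ᵥ v = 0 := by
    intro v hv
    rw [hHtdef]
    exact blk_ker hblkPt (by rw [hGtdef] at hv; exact hv)
  have hGtTHt : Gt * Gtp * Htᵀ = Htᵀ := absorb hGts hTs hGtp hkerGtHt
  -- absorption for Gt, Δ
  have hGt_eq : Gt = G + (Vᵀ * B)ᵀ * Cp * (Vᵀ * B) := by
    rw [hGtdef, hGdef, hPtdef]
    simp only [Matrix.mul_add, Matrix.add_mul, transpose_mul, transpose_transpose,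
      Matrix.mul_assoc]
    abel
  have hkerGtΔ : ∀ v, Gt *ᵥ v = 0 → (Vᵀ * B) *ᵥ v = 0 := by
    intro v hv
    have hq : v ⬝ᵥ (Gt *ᵥ v) = 0 := by rw [hv, dotProduct_zero]
    rw [hGt_eq, Matrix.add_mulVec, dotProduct_add] at hq
    have h1 : 0 ≤ v ⬝ᵥ (G *ᵥ v) := psd_nonneg hG_psd v
    have hD_psd : ((Vᵀ * B)ᵀ * Cp * (Vᵀ * B)).PosSemidef := psd_conj hCp_psd _
    have h2 : 0 ≤ v ⬝ᵥ (((Vᵀ * B)ᵀ * Cp * (Vᵀ * B)) *ᵥ v) := psd_nonneg hD_psd v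
    have hDq : v ⬝ᵥ (((Vᵀ * B)ᵀ * Cp * (Vᵀ * B)) *ᵥ v) = 0 := by linarith
    rw [quad_conj] at hDq
    have hCpu : Cp *ᵥ ((Vᵀ * B) *ᵥ v) = 0 := psd_quad_zero hCp_psd hDq
    calc (Vᵀ * B) *ᵥ v = (C * Cp * (Vᵀ * B)) *ᵥ v := by rw [hCcVB]
    _ = C *ᵥ (Cp *ᵥ ((Vᵀ * B) *ᵥ v)) := by
        rw [Matrix.mul_assoc, ← Matrix.mulVec_mulVec, ← Matrix.mulVec_mulVec]
    _ = 0 := by rw [hCpu, Matrix.mulVec_zero]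
  have hGtTΔ' : Gt * Gtp * (Vᵀ * B)ᵀ = (Vᵀ * B)ᵀ := absorb hGts hTs hGtp hkerGtΔ
  have hGtTΔ : Gt * Gtp * (Bᵀ * V) = Bᵀ * V := by
    have h := hGtTΔ'
    simpa [transpose_mul, transpose_transpose] using h
  have hGtE : Gt * E = Bᵀ * V := by rw [hEdef, ← Matrix.mul_assoc]; exact hGtTΔ
  -- the Schur-type decomposition of C'
  have hYbC : Ybᵀ * C = Bᵀ * V := by
    have h := congrArg Matrix.transpose hVB
    simpa [transpose_mul, transpose_transpose, hCt] using h.symm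
  have hmid2 : Ybᵀ * (Vᵀ * B) = Bᵀ * V * (Cp * (Vᵀ * B)) := by
    calc Ybᵀ * (Vᵀ * B) = Ybᵀ * C * Yb := by rw [hVB, ← Matrix.mul_assoc]
    _ = Bᵀ * V * Yb := by rw [hYbC]
    _ = Bᵀ * V * (Cp * C) * Yb := by rw [h3]
    _ = Bᵀ * V * (Cp * (Vᵀ * B)) := by rw [hVB]; simp only [Matrix.mul_assoc]
  have hGtmG : Bᵀ * V * (Cp * (Vᵀ * B)) = Gt - G := by
    rw [hGt_eq]
    simp only [transpose_mul, transpose_transpose, Matrix.mul_assoc]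
    abel
  have hS7 : Eᵀ * G * E + (1 - Yb * E)ᵀ * C * (1 - Yb * E) = C' := by
    have expand : (1 - Yb * E)ᵀ * C * (1 - Yb * E)
        = C - Eᵀ * (Ybᵀ * C) - (C * Yb) * E + Eᵀ * ((Ybᵀ * (C * Yb)) * E) := by
      simp only [transpose_sub, transpose_one, transpose_mul, Matrix.sub_mul,
        Matrix.mul_sub, Matrix.one_mul, Matrix.mul_one, Matrix.mul_assoc]
      abel
    rw [expand, hYbC, ← hVB, hmid2, hGtmG, hC'def]
    have hfin : Eᵀ * ((Gt - G) * E) = Eᵀ * (Bᵀ * V) - Eᵀ * (G * E) := by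
      rw [Matrix.sub_mul, Matrix.mul_sub, hGtE]
    rw [hfin]
    simp only [hEdef, Matrix.mul_assoc]
    abel
  have hC'_psd : C'.PosSemidef := by
    rw [← hS7]
    exact (psd_conj hG_psd E).add (psd_conj hC (1 - Yb * E))
  have hC's : C'ᵀ = C' := by rw [← conjTranspose_eq_transpose_of_trivial]; exact hC'_psd.1
  have hc's : Cp'ᵀ = Cp' := IsMP.symm_of_symm hC's hCp'
  -- V' range fact
  have hV'eq : V' = W - Ht * Gtp * (Bᵀ * V) := by
    rw [hV'def, hWdef]
    simp only [Matrix.sub_mul, Matrix.mul_assoc]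
  have hHt_eq : Ht = H + Aᵀ * V * (Cp * (Vᵀ * B)) := by
    rw [hHtdef, hHdef, hPtdef]
    simp only [Matrix.mul_add, Matrix.add_mul, Matrix.mul_assoc]
    abel
  have hWCpVB : Aᵀ * V * (Cp * (Vᵀ * B)) = Aᵀ * V * Yb := by
    calc Aᵀ * V * (Cp * (Vᵀ * B)) = Aᵀ * (V * (Cp * C)) * Yb := by
          rw [hVB]; simp only [Matrix.mul_assoc]
    _ = Aᵀ * V * Yb := by rw [h4]
  have hV'alt : V' = (Aᵀ * Yᵀ) * (C * (1 - Yb * E)) - H * E := by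
    rw [hV'eq, hWdef, Matrix.mul_assoc Ht, ← hEdef, hHt_eq, hWCpVB]
    rw [hVY]
    simp only [Matrix.add_mul, Matrix.mul_sub, Matrix.mul_one, Matrix.mul_assoc]
    abel
  have hkerC'V' : ∀ z, C' *ᵥ z = 0 → V' *ᵥ z = 0 := by
    intro z hz
    have hq : z ⬝ᵥ (C' *ᵥ z) = 0 := by rw [hz, dotProduct_zero]
    rw [← hS7, Matrix.add_mulVec, dotProduct_add, quad_conj, quad_conj] at hq
    have h1 := psd_nonneg hG_psd (E *ᵥ z)
    have h2 := psd_nonneg hC ((1 - Yb * E) *ᵥ z)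
    have hGw : G *ᵥ (E *ᵥ z) = 0 := psd_quad_zero hG_psd (by linarith)
    have hCt0 : C *ᵥ ((1 - Yb * E) *ᵥ z) = 0 := psd_quad_zero hC (by linarith)
    have hHw : H *ᵥ (E *ᵥ z) = 0 := hkerGH _ hGw
    have e2 : (H * E) *ᵥ z = 0 := by rw [← Matrix.mulVec_mulVec]; exact hHw
    have e1 : ((Aᵀ * Yᵀ) * (C * (1 - Yb * E))) *ᵥ z = 0 := by
      have h0 : (Aᵀ * Yᵀ) *ᵥ (C *ᵥ ((1 - Yb * E) *ᵥ z)) = 0 := by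
        rw [hCt0, Matrix.mulVec_zero]
      rw [← h0]; simp only [Matrix.mulVec_mulVec]
    rw [hV'alt, Matrix.sub_mulVec, e1, e2, sub_zero]
  have hC'c'V' : C' * Cp' * V'ᵀ = V'ᵀ := absorb hC's hc's hCp' hkerC'V'
  -- the k-hypotheses for `key`
  have k1 : Gt = G + Bᵀ * V * Cp * (Bᵀ * V)ᵀ := by
    rw [hGt_eq]
    simp only [transpose_mul, transpose_transpose, Matrix.mul_assoc]
  have k2 : Ht = H + W * Cp * (Bᵀ * V)ᵀ := by
    rw [hHt_eq, hWdef]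
    simp only [transpose_mul, transpose_transpose, Matrix.mul_assoc]
  have k3 : C' = C - (Bᵀ * V)ᵀ * Gtp * (Bᵀ * V) := by
    rw [hC'def]
    simp only [transpose_mul, transpose_transpose, Matrix.mul_assoc]
  have k4 : V' = W - Ht * Gtp * (Bᵀ * V) := hV'eq
  have k10 : C * Cp * Wᵀ = Wᵀ := by
    rw [hWdef]
    simp only [transpose_mul, transpose_transpose]
    exact hCcVA
  have k11 : C * Cp * (Bᵀ * V)ᵀ = (Bᵀ * V)ᵀ := by
    simp only [transpose_mul, transpose_transpose]
    exact hCcVB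
  have kk := key C Cp Cp' C' Gp Gtp G Gt (Bᵀ * V) W V' H Ht
    k1 k2 k3 k4 hCt hcs hgs hTs hGts k10 k11 hGgH hGtTHt hGtTΔ hC'c'V'
  refine ⟨?_, hC'_psd, ⟨Cp' * V'ᵀ, ?_⟩⟩
  · have hexp : Aᵀ * Pt * A = Aᵀ * P * A + W * Cp * Wᵀ := by
      rw [hPtdef, hWdef]
      simp only [Matrix.mul_add, Matrix.add_mul, transpose_mul, transpose_transpose,
        Matrix.mul_assoc]
    have kk2 : W * Cp * Wᵀ = (Ht * Gtp * Htᵀ + V' * Cp' * V'ᵀ) - H * Gp * Hᵀ := by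
      rw [eq_sub_iff_add_eq]; exact kk
    rw [hexp, kk2]
    abel
  · rw [← Matrix.mul_assoc]
    exact hC'c'V'.symm
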